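/- In the block construction, for each j ∈ [m] the number N_j of sets in F that contain exactly j of the blocks B_1,…,B_m satisfies N_j = C(m, j) · 2^{(m−j)s}, where C(m,j) is the binomial coefficient. -/

import Mathlib

open Finset

/-- A family of finite sets is union-closed if it contains the union of any two of
its members. -/
def UnionClosed {α : Type*} [DecidableEq α] (F : Finset (Finset α)) : Prop :=
  ∀ A ∈ F, ∀ B ∈ F, A ∪ B ∈ F

/-- The abundance of `x` with respect to a family `F`. -/
noncomputable def abundance {α : Type*} [DecidableEq α] (F : Finset (Finset α)) (x : α) : ℝ :=
  ((F.filter (fun A => x ∈ A)).card : ℝ) / (F.card : ℝ)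

/-- The average overlap density of `F`. -/
noncomputable def AOD {α : Type*} [DecidableEq α] (F : Finset (Finset α)) : ℝ :=
  (1 / (((F.erase ∅).card : ℝ))) *
    ∑ A ∈ F.erase ∅, (1 / (A.card : ℝ)) * ∑ x ∈ A, abundance F x

/-- The union-closed family generated by `G = {B i ∪ {j} : i, j ∈ T}`:
all unions of nonempty subcollections of `G`. -/
def blockFamily {n m : ℕ} (B : Fin m → Finset (Fin n)) (T : Finset (Fin n)) :
    Finset (Finset (Fin n)) :=
  ((((univ : Finset (Fin m)) ×ˢ T).image (fun p => B p.1 ∪ {p.2})).powerset.filter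
      (fun C => C.Nonempty)).image (fun C => C.sup id)

section Aux

variable {n m : ℕ} (B : Fin m → Finset (Fin n)) (T : Fin m → Finset (Fin n))

/-- Membership characterization of the block family. -/
lemma mem_blockFamily_iff
    (hT : ∀ i, T i ⊆ B i) (hTne : ∀ i, (T i).Nonempty) (A : Finset (Fin n)) :
    A ∈ blockFamily B (univ.biUnion T) ↔
      ∃ S : Finset (Fin m), S.Nonempty ∧ ∃ U ⊆ univ.biUnion T, A = S.biUnion B ∪ U := by
  constructor
  · intro hA
    simp only [blockFamily, mem_image, mem_filter, mem_powerset] at hA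
    obtain ⟨C, ⟨hCsub, hCne⟩, rfl⟩ := hA
    have hgen : ∀ c ∈ C, ∃ i, ∃ t ∈ univ.biUnion T, c = B i ∪ {t} := by
      intro c hc
      obtain ⟨p, hp, hpc⟩ := mem_image.mp (hCsub hc)
      exact ⟨p.1, p.2, (mem_product.mp hp).2, hpc.symm⟩
    refine ⟨univ.filter (fun i => B i ⊆ C.sup id), ?_,
      (C.sup id) ∩ univ.biUnion T, inter_subset_right, ?_⟩
    · obtain ⟨c, hc⟩ := hCne
      obtain ⟨i, t, _, rfl⟩ := hgen c hc
      refine ⟨i, mem_filter.mpr ⟨mem_univ _, ?_⟩⟩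
      exact (union_subset_iff.mp (le_sup (f := id) hc)).1
    · ext x
      simp only [mem_union, mem_biUnion, mem_filter, mem_inter]
      constructor
      · intro hx
        obtain ⟨c, hc, hxc⟩ := mem_sup.mp hx
        obtain ⟨i, t, ht, rfl⟩ := hgen c hc
        rcases mem_union.mp hxc with hxB | hxt
        · exact Or.inl ⟨i, ⟨mem_univ _, (union_subset_iff.mp (le_sup (f := id) hc)).1⟩, hxB⟩
        · obtain ⟨a, _, hta⟩ := mem_biUnion.mp ht
          exact Or.inr ⟨hx, a, mem_univ _, mem_singleton.mp hxt ▸ hta⟩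
      · rintro (⟨i, ⟨_, hi⟩, hx⟩ | ⟨hx, _⟩)
        · exact hi hx
        · exact hx
  · rintro ⟨S, ⟨i0, hi0⟩, U, hU, rfl⟩
    simp only [blockFamily, mem_image, mem_filter, mem_powerset]
    refine ⟨(S ×ˢ (T i0 ∪ U)).image (fun p => B p.1 ∪ {p.2}), ⟨?_, ?_⟩, ?_⟩
    · apply image_subset_image
      apply product_subset_product (subset_univ _)
      exact union_subset (fun t ht => mem_biUnion.mpr ⟨i0, mem_univ _, ht⟩) hU
    · obtain ⟨t0, ht0⟩ := hTne i0
      exact Nonempty.image ⟨(i0, t0), mem_product.mpr ⟨hi0, mem_union_left _ ht0⟩⟩ _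
    · rw [sup_image]
      ext x
      simp only [mem_sup, mem_product, mem_union, mem_biUnion, Function.comp]
      obtain ⟨t0, ht0⟩ := hTne i0
      constructor
      · rintro ⟨⟨i, t⟩, ⟨hiS, ht⟩, hx⟩
        rcases mem_union.mp hx with hxB | hxt
        · exact Or.inl ⟨i, hiS, hxB⟩
        · rw [mem_singleton.mp hxt]
          rcases ht with ht | ht
          · exact Or.inl ⟨i0, hi0, hT i0 ht⟩
          · exact Or.inr ht
      · rintro (⟨i, hiS, hx⟩ | hx)
        · exact ⟨(i, t0), ⟨hiS, Or.inl ht0⟩, mem_union_left _ hx⟩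
        · exact ⟨(i0, x), ⟨hi0, Or.inr hx⟩, mem_union_right _ (mem_singleton_self x)⟩

/-- The blocks contained in `S.biUnion B ∪ U` are exactly those in `S`. -/
lemma blocks_of_canonical
    (hT : ∀ i, T i ⊆ B i)
    (hBdisj : ∀ i j : Fin m, i ≠ j → Disjoint (B i) (B j))
    (hlt : ∀ i, (T i).card < (B i).card)
    (S : Finset (Fin m)) (U : Finset (Fin n)) (hU : U ⊆ univ.biUnion T) :
    univ.filter (fun l : Fin m => B l ⊆ S.biUnion B ∪ U) = S := by
  ext l
  simp only [mem_filter, mem_univ, true_and]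
  constructor
  · intro hl
    by_contra hlS
    have hBl : B l ⊆ T l := by
      intro x hx
      rcases mem_union.mp (hl hx) with hxB | hxU
      · obtain ⟨i, hiS, hxi⟩ := mem_biUnion.mp hxB
        have : i = l := by
          by_contra hne
          exact disjoint_left.mp (hBdisj i l hne) hxi hx
        exact absurd (this ▸ hiS) hlS
      · obtain ⟨i, _, hxi⟩ := mem_biUnion.mp (hU hxU)
        have : i = l := by
          by_contra hne
          exact disjoint_left.mp (hBdisj i l hne) (hT i hxi) hx
        exact this ▸ hxi
    exact absurd (card_le_card hBl) (not_le.mpr (hlt l))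
  · intro hl
    exact (subset_biUnion_of_mem B hl).trans subset_union_left

end Aux

/-- In the block construction, the number of sets of `F` containing exactly
`j` of the blocks is `C(m, j) · 2^{(m−j)s}`. -/
theorem blockFamily_count_exactly_j_blocks
    (k m s : ℕ) (hk : 0 < k) (hm : 2 ≤ m) (hs : 0 < s) (hsk : s + 2 ≤ k)
    (B : Fin m → Finset (Fin (k * m)))
    (hBcard : ∀ i, (B i).card = k)
    (hBdisj : ∀ i j : Fin m, i ≠ j → Disjoint (B i) (B j))
    (hBcover : (Finset.univ : Finset (Fin m)).biUnion B = (Finset.univ : Finset (Fin (k * m))))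
    (T : Fin m → Finset (Fin (k * m)))
    (hT : ∀ i, T i ⊆ B i) (hTcard : ∀ i, (T i).card = s)
    :
    ∀ j : ℕ, 1 ≤ j → j ≤ m →
      ((blockFamily B ((univ : Finset (Fin m)).biUnion T)).filter
          (fun A => (univ.filter (fun i : Fin m => B i ⊆ A)).card = j)).card
        = m.choose j * 2 ^ ((m - j) * s) := by
  intro j hj1 hjm
  set T' := (univ : Finset (Fin m)).biUnion T with hT'
  have hTne : ∀ i, (T i).Nonempty := fun i => card_pos.mp (by rw [hTcard i]; exact hs)
  have hlt : ∀ i, (T i).card < (B i).card := fun i => by rw [hTcard i, hBcard i]; omega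
  have hWdisjB : ∀ S : Finset (Fin m),
      Disjoint (S.biUnion B) ((univ \ S).biUnion T) := by
    intro S
    rw [disjoint_left]
    intro x hx hx'
    obtain ⟨i, hiS, hxi⟩ := mem_biUnion.mp hx
    obtain ⟨a, haS, hxa⟩ := mem_biUnion.mp hx'
    have hne : i ≠ a := fun h => (mem_sdiff.mp haS).2 (h ▸ hiS)
    exact disjoint_left.mp (hBdisj i a hne) hxi (hT a hxa)
  have key : (blockFamily B T').filter
        (fun A => (univ.filter (fun i : Fin m => B i ⊆ A)).card = j)
      = (univ.powersetCard j).biUnion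
          (fun S => (((univ \ S).biUnion T).powerset).image (fun U => S.biUnion B ∪ U)) := by
    ext A
    simp only [mem_filter, mem_biUnion, mem_image, mem_powerset, mem_powersetCard_univ]
    constructor
    · rintro ⟨hA, hcard⟩
      obtain ⟨S, hSne, U, hU, rfl⟩ := (mem_blockFamily_iff B T hT hTne A).mp hA
      have hSeq := blocks_of_canonical B T hT hBdisj hlt S U hU
      refine ⟨S, by rw [← hSeq]; exact hcard, U \ S.biUnion B, ?_, ?_⟩
      · intro u hu
        obtain ⟨huU, huB⟩ := mem_sdiff.mp hu
        obtain ⟨a, _, hua⟩ := mem_biUnion.mp (hU huU)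
        refine mem_biUnion.mpr ⟨a, mem_sdiff.mpr ⟨mem_univ _, fun haS => ?_⟩, hua⟩
        exact huB (mem_biUnion.mpr ⟨a, haS, hT a hua⟩)
      · rw [union_sdiff_self_eq_union]
    · rintro ⟨S, hScard, U, hU, rfl⟩
      have hSne : S.Nonempty := card_pos.mp (by omega)
      have hUT' : U ⊆ T' := hU.trans (biUnion_subset_biUnion_of_subset_left T (subset_univ _))
      refine ⟨(mem_blockFamily_iff B T hT hTne _).mpr ⟨S, hSne, U, hUT', rfl⟩, ?_⟩
      rw [blocks_of_canonical B T hT hBdisj hlt S U hUT', hScard]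
  rw [key, card_biUnion]
  · have himg : ∀ S ∈ univ.powersetCard j,
        ((((univ \ S).biUnion T).powerset).image (fun U => S.biUnion B ∪ U)).card
          = 2 ^ ((m - j) * s) := by
      intro S hS
      rw [card_image_of_injOn, card_powerset]
      · congr 1
        rw [card_biUnion]
        · rw [sum_congr rfl (fun i _ => hTcard i), sum_const, smul_eq_mul,
            card_sdiff_of_subset (subset_univ S), card_univ, Fintype.card_fin,
            (mem_powersetCard_univ.mp hS)]
        · intro a ha b hb hab
          exact (hBdisj a b hab).mono (hT a) (hT b)
      · intro U1 h1 U2 h2 heq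
        rw [mem_coe, mem_powerset] at h1 h2
        have d1 : Disjoint (S.biUnion B) U1 := (hWdisjB S).mono_right h1
        have d2 : Disjoint (S.biUnion B) U2 := (hWdisjB S).mono_right h2
        have := congrArg (fun X => X \ S.biUnion B) heq
        simpa [union_sdiff_cancel_left d1, union_sdiff_cancel_left d2] using this
    rw [sum_congr rfl himg, sum_const, smul_eq_mul, card_powersetCard, card_univ,
      Fintype.card_fin]
  · intro S1 h1 S2 h2 hne
    rw [Function.onFun, disjoint_left]
    intro A hA1 hA2
    obtain ⟨U1, hU1, rfl⟩ := mem_image.mp hA1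
    obtain ⟨U2, hU2, hEq⟩ := mem_image.mp hA2
    rw [mem_powerset] at hU1 hU2
    have hU1T : U1 ⊆ T' := hU1.trans (biUnion_subset_biUnion_of_subset_left T (subset_univ _))
    have hU2T : U2 ⊆ T' := hU2.trans (biUnion_subset_biUnion_of_subset_left T (subset_univ _))
    have e1 := blocks_of_canonical B T hT hBdisj hlt S1 U1 hU1T
    have e2 := blocks_of_canonical B T hT hBdisj hlt S2 U2 hU2T
    rw [hEq] at e2
    exact hne (e1.symm.trans e2)
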